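/- Let M be a 3-connected matroid and z ∈ E(M). Then M has a vertical 3-separation (X, {z}, Y) if and only if the simplification of M/z is not 3-connected. -/

import Mathlib

open Set Matroid

namespace NDP

variable {α : Type*}

/-- The rank of a set in a matroid: the supremum of sizes of independent subsets. -/
noncomputable def rk (M : Matroid α) (X : Set α) : ℕ :=
  sSup {n | ∃ I, M.Indep I ∧ I ⊆ X ∧ I.ncard = n}

/-- A circuit: a minimal dependent subset of the ground set. -/
def Circuit (M : Matroid α) (C : Set α) : Prop :=
  C ⊆ M.E ∧ ¬ M.Indep C ∧ ∀ x ∈ C, M.Indep (C \ {x})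

/-- A cocircuit: a circuit of the dual matroid. -/
def Cocircuit (M : Matroid α) (C : Set α) : Prop := Circuit M✶ C

/-- Deletion of a set of elements. -/
def delete (M : Matroid α) (D : Set α) : Matroid α := M ↾ (M.E \ D)

/-- Contraction of a set of elements. -/
def contract (M : Matroid α) (C : Set α) : Matroid α := (delete M✶ C)✶

/-- The connectivity function `λ_M(X) = r(X) + r(E − X) − r(M)`. -/
noncomputable def lambda (M : Matroid α) (X : Set α) : ℤ :=
  (rk M X : ℤ) + (rk M (M.E \ X) : ℤ) - (rk M M.E : ℤ)

/-- `S` gives a `k`-separation `(S, E − S)` of `M`. -/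
def IsKSeparation (M : Matroid α) (k : ℕ) (S : Set α) : Prop :=
  S ⊆ M.E ∧ lambda M S ≤ (k : ℤ) - 1 ∧ k ≤ S.ncard ∧ k ≤ (M.E \ S).ncard

/-- A matroid is connected (2-connected) if it has no 1-separation. -/
def Connected (M : Matroid α) : Prop := ∀ S, ¬ IsKSeparation M 1 S

/-- A matroid is 3-connected if it has no `k`-separation for `k < 3`. -/
def ThreeConnected (M : Matroid α) : Prop := ∀ k < 3, ∀ S, ¬ IsKSeparation M k S

/-- Isomorphism of two matroids on the same type. -/
def Iso (M N : Matroid α) : Prop :=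
  ∃ e : M.E ≃ N.E,
    ∀ I : Set M.E, M.Indep (Subtype.val '' I) ↔ N.Indep (Subtype.val '' (e '' I))

/-- `N` is a minor of `M`. -/
def IsMinor (N M : Matroid α) : Prop :=
  ∃ C D : Set α, C ⊆ M.E ∧ D ⊆ M.E ∧ Disjoint C D ∧ N = delete (contract M C) D

/-- `M` has a minor isomorphic to `N`. -/
def HasMinorIso (M N : Matroid α) : Prop := ∃ M', IsMinor M' M ∧ Iso M' N

/-- `N` is a simplification of `M`: the restriction of `M` to a set of representatives,
one from each parallel class of nonloop elements. -/
def IsSimplification (M N : Matroid α) : Prop :=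
  ∃ X ⊆ M.E, N = M ↾ X ∧
    (∀ e ∈ X, M.Indep {e}) ∧
    (∀ e f, e ∈ X → f ∈ X → e ∈ M.closure {f} → e = f) ∧
    (∀ e ∈ M.E, M.Indep {e} → ∃ f ∈ X, e ∈ M.closure {f})

/-- `si M` is 3-connected. -/
def SiThreeConnected (M : Matroid α) : Prop :=
  ∀ N, IsSimplification M N → ThreeConnected N

/-- `co M` is 3-connected; the cosimplification is the dual of the simplification of the dual. -/
def CoThreeConnected (M : Matroid α) : Prop :=
  ∀ N, IsSimplification M✶ N → ThreeConnected N✶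

end NDP


namespace NDP
section RankBasics

variable {M : Matroid α} {X Y I J : Set α} {e f : α}

lemma rk_le_of_indep (hE : M.E.Finite) (hI : M.Indep I) (hIX : I ⊆ X) :
    I.ncard ≤ rk M X := by
  refine le_csSup ⟨(X ∩ M.E).ncard, ?_⟩ ⟨I, hI, hIX, rfl⟩
  rintro n ⟨J, hJ, hJX, rfl⟩
  exact ncard_le_ncard (subset_inter hJX hJ.subset_ground) (hE.subset inter_subset_right)

lemma basis'_rk_eq (hE : M.E.Finite) (hI : M.IsBasis' I X) : rk M X = I.ncard := by
  refine le_antisymm (csSup_le ⟨0, ∅, M.empty_indep, empty_subset _, by simp⟩ ?_)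
    (rk_le_of_indep hE hI.indep hI.subset)
  rintro n ⟨J, hJ, hJX, rfl⟩
  obtain ⟨J', hJ', hJJ'⟩ := hJ.subset_isBasis'_of_subset hJX
  have h1 : J'.ncard = I.ncard := by
    have h2 : (M ↾ X).IsBase J' := isBase_restrict_iff'.2 hJ'
    have h3 : (M ↾ X).IsBase I := isBase_restrict_iff'.2 hI
    exact h2.ncard_eq_ncard_of_isBase h3
  exact le_trans (ncard_le_ncard hJJ' (hE.subset hJ'.indep.subset_ground)) h1.le

lemma exists_rk_basis' (hE : M.E.Finite) (X : Set α) :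
    ∃ I, M.IsBasis' I X ∧ I.ncard = rk M X := by
  obtain ⟨I, hI⟩ := M.exists_isBasis' X
  exact ⟨I, hI, (basis'_rk_eq hE hI).symm⟩

lemma rk_mono (hE : M.E.Finite) (hXY : X ⊆ Y) : rk M X ≤ rk M Y := by
  obtain ⟨I, hI, hcard⟩ := exists_rk_basis' hE X
  rw [← hcard]
  exact rk_le_of_indep hE hI.indep (hI.subset.trans hXY)

lemma indep_rk_eq (hE : M.E.Finite) (hI : M.Indep I) : rk M I = I.ncard :=
  basis'_rk_eq hE (hI.isBasis_self.isBasis')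

lemma rk_le_ncard (hE : M.E.Finite) (hX : X.Finite) : rk M X ≤ X.ncard := by
  obtain ⟨I, hI, hcard⟩ := exists_rk_basis' hE X
  rw [← hcard]; exact ncard_le_ncard hI.subset hX

@[simp] lemma rk_empty (hE : M.E.Finite) : rk M (∅ : Set α) = 0 := by
  simpa using indep_rk_eq hE M.empty_indep

lemma rk_closure_eq (hE : M.E.Finite) (X : Set α) : rk M (M.closure X) = rk M X := by
  obtain ⟨I, hI, hcard⟩ := exists_rk_basis' hE X
  rw [basis'_rk_eq hE hI, basis'_rk_eq hE (hI.isBasis_closure_right.isBasis')]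

lemma rk_le_of_subset_closure (hE : M.E.Finite) (hXY : X ⊆ M.closure Y) :
    rk M X ≤ rk M Y := by
  rw [← rk_closure_eq hE Y]; exact rk_mono hE hXY

lemma rk_inter_ground (hE : M.E.Finite) (X : Set α) : rk M (X ∩ M.E) = rk M X := by
  refine le_antisymm (rk_mono hE inter_subset_left) ?_
  obtain ⟨I, hI, hcard⟩ := exists_rk_basis' hE X
  rw [← hcard]
  exact rk_le_of_indep hE hI.indep (subset_inter hI.subset hI.indep.subset_ground)

lemma rk_insert_le (hE : M.E.Finite) (X : Set α) (e : α) :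
    rk M (insert e X) ≤ rk M X + 1 := by
  obtain ⟨I, hI, hcard⟩ := exists_rk_basis' hE (insert e X)
  rw [← hcard]
  have h1 : I \ {e} ⊆ X := by
    rintro x ⟨hx1, hx2⟩
    rcases hI.subset hx1 with h | h
    · exact absurd h hx2
    · exact h
  have h2 : (I \ {e}).ncard ≤ rk M X := rk_le_of_indep hE (hI.indep.diff _) h1
  have h3 : I.Finite := hE.subset hI.indep.subset_ground
  rcases em (e ∈ I) with he | he
  · have h4 : I.ncard ≤ (I \ {e}).ncard + 1 := by
      rw [ncard_diff_singleton_add_one he h3]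
    omega
  · rw [diff_singleton_eq_self he] at h2; omega

lemma rk_insert_eq_of_not_mem_closure (hE : M.E.Finite) (he : e ∈ M.E)
    (hecl : e ∉ M.closure X) : rk M (insert e X) = rk M X + 1 := by
  obtain ⟨I, hI, hcard⟩ := exists_rk_basis' hE X
  have hclI : M.closure I = M.closure X := hI.closure_eq_closure
  have heI : e ∉ I := fun heI => hecl (by
    rw [← hclI]
    exact M.subset_closure I hI.indep.subset_ground heI)
  have hins : M.Indep (insert e I) := by
    rw [hI.indep.insert_indep_iff_of_notMem heI, hclI]
    exact ⟨he, hecl⟩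
  have h1 : (insert e I).ncard ≤ rk M (insert e X) :=
    rk_le_of_indep hE hins (insert_subset_insert hI.subset)
  have h2 : (insert e I).ncard = I.ncard + 1 :=
    ncard_insert_of_notMem heI (hE.subset hI.indep.subset_ground)
  have h3 := rk_insert_le hE X e
  omega

lemma mem_closure_iff_rk (hE : M.E.Finite) (he : e ∈ M.E) :
    e ∈ M.closure X ↔ rk M (insert e X) = rk M X := by
  constructor
  · intro hecl
    refine le_antisymm ?_ (rk_mono hE (subset_insert _ _))
    rw [← rk_inter_ground hE (insert e X), ← rk_closure_eq hE X]
    refine rk_mono hE ?_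
    rintro x ⟨hx1, hx2⟩
    rcases hx1 with h | h
    · exact h ▸ hecl
    · have := M.subset_closure (X ∩ M.E) inter_subset_right ⟨h, hx2⟩
      rwa [closure_inter_ground] at this
  · intro h
    by_contra hecl
    rw [rk_insert_eq_of_not_mem_closure hE he hecl] at h
    omega

lemma rk_submod (hE : M.E.Finite) (hA : X ⊆ M.E) (hB : Y ⊆ M.E) :
    rk M (X ∪ Y) + rk M (X ∩ Y) ≤ rk M X + rk M Y := by
  obtain ⟨I, hI, hcardI⟩ := exists_rk_basis' hE (X ∩ Y)
  obtain ⟨J, hJ, hIJ⟩ := hI.indep.subset_isBasis'_of_subset (hI.subset.trans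
    (inter_subset_left.trans subset_union_left))
  have hJfin : J.Finite := hE.subset hJ.indep.subset_ground
  have h1 : (J ∩ X).ncard ≤ rk M X := rk_le_of_indep hE (hJ.indep.inter_right X)
    inter_subset_right
  have h2 : (J ∩ Y).ncard ≤ rk M Y := rk_le_of_indep hE (hJ.indep.inter_right Y)
    inter_subset_right
  have h3 : (J ∩ X) ∪ (J ∩ Y) = J := by
    rw [← inter_union_distrib_left, inter_eq_left]; exact hJ.subset
  have h4 : (J ∩ X) ∩ (J ∩ Y) = J ∩ (X ∩ Y) := by ext x; simp; tauto
  have h5 := ncard_union_add_ncard_inter (J ∩ X) (J ∩ Y) (hJfin.subset inter_subset_left)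
    (hJfin.subset inter_subset_left)
  rw [h3, h4] at h5
  have h6 : I ⊆ J ∩ (X ∩ Y) := subset_inter hIJ hI.subset
  have h7 : I.ncard ≤ (J ∩ (X ∩ Y)).ncard := ncard_le_ncard h6 (hJfin.subset inter_subset_left)
  have h8 : rk M (X ∪ Y) = J.ncard := basis'_rk_eq hE hJ
  omega

end RankBasics






variable {M : Matroid α} {X Y I J B C : Set α} {e f z : α}

lemma base_ncard_eq_rk_ground (hE : M.E.Finite) (hB : M.IsBase B) : B.ncard = rk M M.E :=
  (basis'_rk_eq hE hB.isBasis_ground.isBasis').symm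

lemma lambda_nonneg (hE : M.E.Finite) (hX : X ⊆ M.E) : 0 ≤ lambda M X := by
  have h := rk_submod hE hX (diff_subset (s := M.E) (t := X))
  rw [union_diff_cancel hX, inter_diff_self] at h
  rw [rk_empty hE] at h
  unfold lambda
  push_cast
  omega

lemma rk_dual_add_eq (hE : M.E.Finite) (hX : X ⊆ M.E) :
    rk M✶ X + rk M M.E = X.ncard + rk M (M.E \ X) := by
  classical
  obtain ⟨I, hI, hIcard⟩ := exists_rk_basis' hE (M.E \ X)
  obtain ⟨B, hB, hIB⟩ := hI.indep.subset_isBasis_of_subset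
    (hI.subset.trans diff_subset) Subset.rfl
  rw [isBasis_ground_iff] at hB
  have hXfin : X.Finite := hE.subset hX
  have hBfin : B.Finite := hE.subset hB.subset_ground
  -- B ∩ (M.E \ X) has the same card as I
  have hBd : (B ∩ (M.E \ X)).ncard = rk M (M.E \ X) := by
    refine le_antisymm (rk_le_of_indep hE (hB.indep.inter_right _) inter_subset_right) ?_
    rw [← hIcard]
    exact ncard_le_ncard (subset_inter hIB (hI.subset)) (hBfin.subset inter_subset_left)
  have hBcard : B.ncard = rk M M.E := base_ncard_eq_rk_ground hE hB
  -- the dual rank of X equals (X \ B).ncard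
  have hsplit : (X ∩ B).ncard + (X \ B).ncard = X.ncard := by
    rw [ncard_inter_add_ncard_diff_eq_ncard X B hXfin]
  have hBsplit : (B ∩ X).ncard + (B ∩ (M.E \ X)).ncard = B.ncard := by
    have : B ∩ (M.E \ X) = B \ X := by
      ext x; simp only [mem_inter_iff, mem_diff]
      exact ⟨fun h => ⟨h.1, h.2.2⟩, fun h => ⟨h.1, hB.subset_ground h.1, h.2⟩⟩
    rw [this, ncard_inter_add_ncard_diff_eq_ncard B X hBfin]
  have hdualrk : rk M✶ X = (X \ B).ncard := by
    refine le_antisymm ?_ ?_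
    · obtain ⟨J, hJ, hJcard⟩ := exists_rk_basis' (M := M✶) (by simpa using hE) X
      rw [← hJcard]
      have hJi : M✶.Indep J := hJ.indep
      rw [dual_indep_iff_exists'] at hJi
      obtain ⟨hJE, B', hB', hdisj⟩ := hJi
      have hB'fin : B'.Finite := hE.subset hB'.subset_ground
      have hJXB' : J ⊆ X \ B' := subset_diff.2 ⟨hJ.subset, hdisj⟩
      have h1 : J.ncard ≤ (X \ B').ncard := ncard_le_ncard hJXB' (hXfin.diff (t := B'))
      -- |X \ B'| ≤ |X \ B| : via |X ∩ B'| ≥ ... need |X∩B'| ≥ |X∩B|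
      have h2 : (X ∩ B').ncard + (X \ B').ncard = X.ncard := by
        rw [ncard_inter_add_ncard_diff_eq_ncard X B' hXfin]
      have hB'card : B'.ncard = rk M M.E := base_ncard_eq_rk_ground hE hB'
      have hB'split : (B' ∩ X).ncard + (B' ∩ (M.E \ X)).ncard = B'.ncard := by
        have : B' ∩ (M.E \ X) = B' \ X := by
          ext x; simp only [mem_inter_iff, mem_diff]
          exact ⟨fun h => ⟨h.1, h.2.2⟩, fun h => ⟨h.1, hB'.subset_ground h.1, h.2⟩⟩
        rw [this, ncard_inter_add_ncard_diff_eq_ncard B' X hB'fin]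
      have h3 : (B' ∩ (M.E \ X)).ncard ≤ rk M (M.E \ X) :=
        rk_le_of_indep hE (hB'.indep.inter_right _) inter_subset_right
      have h4 : (X ∩ B').ncard = (B' ∩ X).ncard := by rw [inter_comm]
      have h5 : (X ∩ B).ncard = (B ∩ X).ncard := by rw [inter_comm]
      omega
    · refine rk_le_of_indep (by simpa using hE) ?_ diff_subset
      rw [dual_indep_iff_exists']
      exact ⟨diff_subset.trans hX, B, hB, disjoint_sdiff_left⟩
  have h5 : (X ∩ B).ncard = (B ∩ X).ncard := by rw [inter_comm]
  omega

lemma rk_restrict (hXR : X ⊆ Y) : rk (M ↾ Y) X = rk M X := by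
  unfold rk
  congr 1
  ext n
  constructor
  · rintro ⟨I, hI, hIX, rfl⟩
    exact ⟨I, (restrict_indep_iff.1 hI).1, hIX, rfl⟩
  · rintro ⟨I, hI, hIX, rfl⟩
    exact ⟨I, restrict_indep_iff.2 ⟨hI, hIX.trans hXR⟩, hIX, rfl⟩

@[simp] lemma contract_ground (M : Matroid α) (C : Set α) :
    (contract M C).E = M.E \ C := rfl

lemma contract_rk_add (hE : M.E.Finite) (hC : C ⊆ M.E) (hX : X ⊆ M.E \ C) :
    rk (contract M C) X + rk M C = rk M (X ∪ C) := by
  set Md := M✶ ↾ (M✶.E \ C) with hMd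
  have hMdE : Md.E = M.E \ C := rfl
  have hMdfin : Md.E.Finite := hE.subset diff_subset
  have hcontr : contract M C = Md✶ := rfl
  -- dual rank formula applied to Md
  have e1 := rk_dual_add_eq hMdfin (X := X) (by rw [hMdE]; exact hX)
  rw [← hcontr, hMdE] at e1
  -- rk Md S = rk M✶ S for S ⊆ M.E \ C
  have hrMd : ∀ S, S ⊆ M.E \ C → rk Md S = rk M✶ S := fun S hS => rk_restrict hS
  rw [hrMd (M.E \ C) Subset.rfl, hrMd ((M.E \ C) \ X) diff_subset] at e1
  -- dual rank formula for M on (E \ C) and on (E \ C) \ X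
  have hEdual : M✶.E.Finite := by simpa using hE
  have e2 := rk_dual_add_eq hE (X := M.E \ C) diff_subset
  rw [diff_diff_cancel_left hC] at e2
  have e3 := rk_dual_add_eq hE (X := (M.E \ C) \ X) (diff_subset.trans diff_subset)
  have hXC : M.E \ ((M.E \ C) \ X) = C ∪ X := by
    have h1 : X ⊆ M.E := hX.trans diff_subset
    ext x
    simp only [mem_diff, mem_union]
    constructor
    · rintro ⟨hxE, h⟩
      by_contra hcon
      push_neg at hcon
      exact h ⟨⟨hxE, hcon.1⟩, hcon.2⟩
    · rintro (h | h)
      · exact ⟨hC h, fun hh => hh.1.2 h⟩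
      · exact ⟨h1 h, fun hh => hh.2 h⟩
  rw [hXC] at e3
  have hcard : ((M.E \ C) \ X).ncard + X.ncard = (M.E \ C).ncard := by
    rw [ncard_diff_add_ncard_of_subset hX (hE.subset diff_subset)]
  have hXCunion : X ∪ C = C ∪ X := union_comm _ _
  rw [hXCunion]
  omega

-- dual ground finiteness helper
lemma dual_ground_finite (hE : M.E.Finite) : M✶.E.Finite := by simpa using hE

lemma contract_ground_finite (hE : M.E.Finite) : (contract M C).E.Finite := by
  rw [contract_ground]; exact hE.subset diff_subset

end NDP



namespace NDP
open Set Matroid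
variable {α : Type*} {M N : Matroid α} {X Y A W S P Q : Set α} {e f z w : α}

lemma mem_closure_singleton_symm (he : M.Indep {e}) (hf : f ∈ M.E)
    (hef : e ∈ M.closure {f}) : f ∈ M.closure {e} := by
  rcases eq_or_ne e f with rfl | hne
  · exact hef
  · by_contra hcon
    have h1 : M.Indep (insert f {e}) := by
      rw [he.insert_indep_iff_of_notMem (by simp [hne.symm])]
      exact ⟨hf, hcon⟩
    have h2 : M.Indep {f} := h1.subset (by simp)
    have h3 : M.Indep (insert e {f}) := by
      have hset : (insert e {f} : Set α) = insert f {e} := pair_comm e f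
      rw [hset]; exact h1
    rw [h2.insert_indep_iff_of_notMem (by simp [hne])] at h3
    exact h3.2 hef

lemma closure_singleton_eq_of_mem (he : M.Indep {e}) (hf : M.Indep {f})
    (hef : e ∈ M.closure {f}) : M.closure {e} = M.closure {f} := by
  have h1 : f ∈ M.closure {e} :=
    mem_closure_singleton_symm he (singleton_subset_iff.1 hf.subset_ground) hef
  exact subset_antisymm
    (closure_subset_closure_of_subset_closure (by simpa using hef))
    (closure_subset_closure_of_subset_closure (by simpa using h1))

lemma exists_simplification [Nonempty α] (N0 : Matroid α) :
    ∃ N, IsSimplification N0 N := by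
  classical
  set L := {e : α | e ∈ N0.E ∧ N0.Indep ({e} : Set α)} with hL
  set φ : α → Set α := fun e => N0.closure {e} with hφ
  set W := (fun e => Function.invFunOn φ L (φ e)) '' L with hW
  have hmem : ∀ e ∈ L, Function.invFunOn φ L (φ e) ∈ L := fun e he =>
    Function.invFunOn_mem ⟨e, he, rfl⟩
  have heq : ∀ e ∈ L, φ (Function.invFunOn φ L (φ e)) = φ e := fun e he =>
    Function.invFunOn_eq ⟨e, he, rfl⟩
  have hWL : W ⊆ L := by rintro x ⟨a, ha, rfl⟩; exact hmem a ha
  refine ⟨N0 ↾ W, W, fun x hx => (hWL hx).1, rfl, fun x hx => (hWL hx).2, ?_, ?_⟩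
  · rintro e f he hf hef
    obtain ⟨a, ha, rfl⟩ := he
    obtain ⟨b, hb, rfl⟩ := hf
    have h1 : φ (Function.invFunOn φ L (φ a)) = φ (Function.invFunOn φ L (φ b)) := by
      have hce : N0.Indep {Function.invFunOn φ L (φ a)} := (hmem a ha).2
      have hcf : N0.Indep {Function.invFunOn φ L (φ b)} := (hmem b hb).2
      exact closure_singleton_eq_of_mem hce hcf hef
    have h2 : φ a = φ b := by rw [← heq a ha, ← heq b hb, h1]
    show Function.invFunOn φ L (φ a) = Function.invFunOn φ L (φ b)
    rw [h2]
  · intro e heE heI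
    have heL : e ∈ L := ⟨heE, heI⟩
    refine ⟨Function.invFunOn φ L (φ e), mem_image_of_mem _ heL, ?_⟩
    have : e ∈ φ e := N0.mem_closure_self e heE
    rwa [← heq e heL] at this

lemma indep_singleton_of_rk (hE : M.E.Finite) (h : rk M {e} = 1) : M.Indep {e} := by
  obtain ⟨I, hI, hc⟩ := exists_rk_basis' hE {e}
  rw [h] at hc
  obtain ⟨a, rfl⟩ := ncard_eq_one.1 hc
  have h2 := hI.subset
  simp only [singleton_subset_iff, mem_singleton_iff] at h2
  subst h2
  exact hI.indep

lemma singleton_rk_one (hE : M.E.Finite) (hM : ThreeConnected M) (h2 : 2 ≤ M.E.ncard)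
    (he : e ∈ M.E) : rk M {e} = 1 := by
  have hcard : ({e} : Set α).ncard = 1 := ncard_singleton e
  have hsub : {e} ⊆ M.E := singleton_subset_iff.2 he
  have hdiff : 1 ≤ (M.E \ {e}).ncard := by
    have := ncard_diff_add_ncard_of_subset hsub hE
    omega
  have hne := hM 1 (by norm_num) {e}
  rw [IsKSeparation] at hne
  push_neg at hne
  have hlam := hne hsub
  have h3 : ¬ lambda M {e} ≤ 0 := by
    intro h; exact absurd hdiff (by simpa [hcard] using (hlam (by push_cast; omega)))
  unfold lambda at h3
  push_neg at h3
  have h4 : rk M {e} ≤ 1 := by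
    have := rk_le_ncard (M := M) hE (finite_singleton e); omega
  have h5 : rk M (M.E \ {e}) ≤ rk M M.E := rk_mono hE diff_subset
  omega

lemma pair_rk_two (hE : M.E.Finite) (hM : ThreeConnected M) (h4 : 4 ≤ M.E.ncard)
    (he : e ∈ M.E) (hf : f ∈ M.E) (hne : e ≠ f) : rk M {e, f} = 2 := by
  have hcard : ({e, f} : Set α).ncard = 2 := ncard_pair hne
  have hsub : {e, f} ⊆ M.E := by
    rintro x hx; rcases hx with rfl | rfl
    exacts [he, hf]
  have hdiff : 2 ≤ (M.E \ {e, f}).ncard := by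
    have := ncard_diff_add_ncard_of_subset hsub hE
    omega
  have hnsep := hM 2 (by norm_num) {e, f}
  rw [IsKSeparation] at hnsep
  push_neg at hnsep
  have h3 : ¬ lambda M {e, f} ≤ 1 := by
    intro h
    exact absurd hdiff (by simpa [hcard] using (hnsep hsub (by push_cast; omega) (by omega)))
  unfold lambda at h3
  push_neg at h3
  have h4' : rk M {e, f} ≤ 2 := by
    have := rk_le_ncard (M := M) hE (Set.Finite.insert e (finite_singleton f)); omega
  have h5 : rk M (M.E \ {e, f}) ≤ rk M M.E := rk_mono hE diff_subset
  omega

lemma Mc_rk (hE : M.E.Finite) (hz : z ∈ M.E) (hzrk : rk M {z} = 1)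
    (hX : X ⊆ M.E \ {z}) : rk (contract M {z}) X + 1 = rk M (insert z X) := by
  have h := contract_rk_add hE (singleton_subset_iff.2 hz) hX
  rwa [hzrk, union_singleton] at h

lemma rk_pair_of_not_parallel (hE : N.E.Finite) (hf : N.Indep {f}) (he : e ∈ N.E)
    (hef : e ∉ N.closure {f}) : rk N (insert e {f}) = 2 := by
  rw [rk_insert_eq_of_not_mem_closure hE he hef, indep_rk_eq hE hf, ncard_singleton]

lemma rk_spanning_eq (hE : N.E.Finite) (hWX : W ⊆ X) (hXW : X ⊆ N.closure W) :
    rk N X = rk N W :=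
  le_antisymm (rk_le_of_subset_closure hE hXW) (rk_mono hE hWX)

end NDP


namespace NDP
open Set Matroid
variable {α : Type*} {M : Matroid α} {X Y A W S P Q : Set α} {e f z w : α}

lemma small_case (hE : M.E.Finite) (hM : ThreeConnected M) (hz : z ∈ M.E)
    (hsmall : M.E.ncard ≤ 3) : SiThreeConnected (contract M {z}) := by
  intro N hN
  obtain ⟨W, hWE, rfl, hW1, hW2, hW3⟩ := hN
  have hWE' : W ⊆ M.E \ {z} := hWE
  have hWfin : W.Finite := (hE.subset diff_subset).subset hWE'
  intro k hk S hS
  obtain ⟨hSW, hlam, hkS, hkS'⟩ := hS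
  rw [restrict_ground_eq] at hSW hkS'
  rcases Nat.eq_zero_or_pos k with rfl | hk1
  · have h0 := lambda_nonneg (M := contract M {z} ↾ W) (X := S)
      (by rw [restrict_ground_eq]; exact hWfin)
      (by rw [restrict_ground_eq]; exact hSW)
    push_cast at hlam
    linarith
  · obtain ⟨w₁, hw₁⟩ := nonempty_of_ncard_ne_zero (show S.ncard ≠ 0 by omega)
    obtain ⟨w₂, hw₂⟩ := nonempty_of_ncard_ne_zero (show (W \ S).ncard ≠ 0 by omega)
    have hw₁W : w₁ ∈ W := hSW hw₁
    have hw₂W : w₂ ∈ W := hw₂.1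
    have hne : w₂ ≠ w₁ := fun h => hw₂.2 (h ▸ hw₁)
    have hw₁E : w₁ ∈ M.E := (hWE' hw₁W).1
    have hw₂E : w₂ ∈ M.E := (hWE' hw₂W).1
    have hz1 : w₁ ≠ z := fun h => (hWE' hw₁W).2 (by simp [h])
    have hz2 : w₂ ≠ z := fun h => (hWE' hw₂W).2 (by simp [h])
    have h2E : 2 ≤ M.E.ncard := by
      have hc2 : ({z, w₁} : Set α).ncard = 2 := ncard_pair (Ne.symm hz1)
      have hsub : ({z, w₁} : Set α) ⊆ M.E := by
        rintro x (rfl | rfl); exacts [hz, hw₁E]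
      have := ncard_le_ncard hsub hE
      omega
    have hzrk : rk M {z} = 1 := singleton_rk_one hE hM h2E hz
    have hpair : rk (contract M {z}) (insert w₂ {w₁}) = 2 := by
      refine rk_pair_of_not_parallel ?_ (hW1 w₁ hw₁W) ?_ ?_
      · rw [contract_ground]; exact hE.subset diff_subset
      · exact hWE' hw₂W
      · intro hcl; exact hne (hW2 w₂ w₁ hw₂W hw₁W hcl)
    have hrk3 : rk M (insert z (insert w₂ {w₁})) = 3 := by
      have := Mc_rk hE hz hzrk (show insert w₂ {w₁} ⊆ M.E \ {z} by
        rintro x (rfl | rfl); exacts [hWE' hw₂W, hWE' hw₁W])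
      omega
    have hznotin : z ∉ (insert w₂ {w₁} : Set α) := by
      simp only [mem_insert_iff, mem_singleton_iff]
      push_neg
      exact ⟨Ne.symm hz2, Ne.symm hz1⟩
    have htriple : ((insert z (insert w₂ {w₁}) : Set α)).ncard = 3 := by
      rw [ncard_insert_of_notMem hznotin, ncard_pair hne]
    have hsubE : insert z (insert w₂ {w₁}) ⊆ M.E := by
      rintro x (rfl | rfl | rfl); exacts [hz, hw₂E, hw₁E]
    have hE3 : M.E.ncard = 3 := by
      have := ncard_le_ncard hsubE hE
      omega
    have hEeq : insert z (insert w₂ {w₁}) = M.E :=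
      eq_of_subset_of_ncard_le hsubE (by omega) hE
    have hrkE : rk M M.E = 3 := by rw [← hEeq]; exact hrk3
    obtain ⟨I, hI, hIc⟩ := exists_rk_basis' hE M.E
    have hIE : I = M.E := eq_of_subset_of_ncard_le hI.subset (by omega) hE
    have hEind : M.Indep M.E := hIE ▸ hI.indep
    have hw1rk : rk M {w₁} = 1 := by
      rw [indep_rk_eq hE (hEind.subset (singleton_subset_iff.2 hw₁E))]
      exact ncard_singleton _
    have hdiffcard : (M.E \ {w₁}).ncard = 2 := by
      have := ncard_diff_add_ncard_of_subset (singleton_subset_iff.2 hw₁E) hE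
      rw [ncard_singleton] at this
      omega
    have hdiffrk : rk M (M.E \ {w₁}) = 2 := by
      rw [indep_rk_eq hE (hEind.subset diff_subset)]
      exact hdiffcard
    refine absurd ?_ (hM 1 (by norm_num) {w₁})
    refine ⟨singleton_subset_iff.2 hw₁E, ?_, by simp, ?_⟩
    · unfold lambda
      rw [hw1rk, hdiffrk, hrkE]
      norm_num
    · rw [hdiffcard]
      omega

lemma lift_closure (hE : M.E.Finite) (hM : ThreeConnected M) (hz : z ∈ M.E)
    (hzrk : rk M {z} = 1) {k : ℕ}
    (hPQ : P ∪ Q = M.E \ {z}) (hdisjPQ : Disjoint P Q) (hk : k < 3)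
    (hlam : (rk (contract M {z}) P : ℤ) + rk (contract M {z}) Q
        - rk (contract M {z}) (M.E \ {z}) ≤ (k : ℤ) - 1)
    (hP : k ≤ P.ncard) (hQ : k ≤ Q.ncard) : z ∈ M.closure P := by
  by_contra hcon
  have hPE' : P ⊆ M.E \ {z} := hPQ ▸ subset_union_left
  have hQE' : Q ⊆ M.E \ {z} := hPQ ▸ subset_union_right
  have e1 := Mc_rk hE hz hzrk hPE'
  have e2 := Mc_rk hE hz hzrk hQE'
  have e3 := Mc_rk hE hz hzrk (Subset.rfl : M.E \ {z} ⊆ M.E \ {z})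
  rw [insert_diff_singleton, insert_eq_of_mem hz] at e3
  have e4 : rk M (insert z P) = rk M P + 1 :=
    rk_insert_eq_of_not_mem_closure hE hz hcon
  have hzQ : z ∉ Q := fun h => (hQE' h).2 rfl
  have hEP : M.E \ P = insert z Q := by
    ext x
    simp only [mem_diff, mem_insert_iff]
    constructor
    · rintro ⟨hxE, hxP⟩
      rcases eq_or_ne x z with rfl | hxz
      · exact Or.inl rfl
      · have hx : x ∈ P ∪ Q := by rw [hPQ]; exact ⟨hxE, hxz⟩
        rcases hx with h | h
        · exact absurd h hxP
        · exact Or.inr h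
    · rintro (rfl | hxQ)
      · exact ⟨hz, fun hzP => (hPE' hzP).2 rfl⟩
      · exact ⟨(hQE' hxQ).1, fun hxP => (hdisjPQ.ne_of_mem hxP hxQ) rfl⟩
  refine absurd ?_ (hM k hk P)
  refine ⟨hPE'.trans diff_subset, ?_, hP, ?_⟩
  · unfold lambda
    rw [hEP]
    push_cast
    omega
  · rw [hEP, ncard_insert_of_notMem hzQ (hE.subset (hQE'.trans diff_subset))]
    omega

end NDP


namespace NDP
open Set Matroid
variable {α : Type*} {M : Matroid α} {X Y A W S P Q : Set α} {e f z w : α} {n : ℕ}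

lemma le_ncard_of_le_rk {N : Matroid α} (hE : N.E.Finite) (hX : X ⊆ N.E)
    (h : n ≤ rk N X) : n ≤ X.ncard :=
  le_trans h (rk_le_ncard hE (hE.subset hX))

lemma forward_dir (hE : M.E.Finite) (hM : ThreeConnected M) (hz : z ∈ M.E)
    (hdisj : Disjoint X Y) (hzX : z ∉ X) (hzY : z ∉ Y) (hunion : X ∪ {z} ∪ Y = M.E)
    (hlam2 : lambda M X ≤ 2) (hc3 : 3 ≤ X.ncard) (hc2 : 3 ≤ Y.ncard)
    (hr3 : 3 ≤ rk M X) (hr2 : 3 ≤ rk M Y)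
    (hzclX : z ∈ M.closure X) (hzclY : z ∈ M.closure Y) :
    ¬ SiThreeConnected (contract M {z}) := by
  classical
  have : Nonempty α := ⟨z⟩
  intro hsi
  -- basic set facts
  have hXE : X ⊆ M.E := fun x hx => hunion ▸ Or.inl (Or.inl hx)
  have hYE : Y ⊆ M.E := fun x hx => hunion ▸ Or.inr hx
  have hXE' : X ⊆ M.E \ {z} := fun x hx => ⟨hXE hx, fun h => hzX (h ▸ hx)⟩
  have hYE' : Y ⊆ M.E \ {z} := fun x hx => ⟨hYE hx, fun h => hzY (h ▸ hx)⟩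
  have hXY' : X ∪ Y = M.E \ {z} := by
    apply subset_antisymm (union_subset hXE' hYE')
    rintro x ⟨hxE, hxz⟩
    have : x ∈ X ∪ {z} ∪ Y := hunion ▸ hxE
    rcases this with (h | h) | h
    · exact Or.inl h
    · exact absurd h hxz
    · exact Or.inr h
  have h4 : 4 ≤ M.E.ncard := by
    have h1 : insert z X ⊆ M.E := insert_subset hz hXE
    have h2 : (insert z X).ncard = X.ncard + 1 :=
      ncard_insert_of_notMem hzX (hE.subset hXE)
    have := ncard_le_ncard h1 hE
    omega
  have hzrk : rk M {z} = 1 := singleton_rk_one hE hM (by omega) hz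
  have hMcfin : (contract M {z}).E.Finite := hE.subset diff_subset
  -- rank equations
  have eX := Mc_rk hE hz hzrk hXE'
  have eY := Mc_rk hE hz hzrk hYE'
  have eE := Mc_rk hE hz hzrk (Subset.rfl : M.E \ {z} ⊆ M.E \ {z})
  rw [insert_diff_singleton, insert_eq_of_mem hz] at eE
  have hXcl : rk M (insert z X) = rk M X := (mem_closure_iff_rk hE hz).1 hzclX
  have hYcl : rk M (insert z Y) = rk M Y := (mem_closure_iff_rk hE hz).1 hzclY
  -- lambda in (contract M {z})
  have hEX : M.E \ X = insert z Y := by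
    ext x
    simp only [mem_diff, mem_insert_iff]
    constructor
    · rintro ⟨hxE, hxX⟩
      rcases eq_or_ne x z with rfl | hxz
      · exact Or.inl rfl
      · have : x ∈ X ∪ Y := hXY' ▸ (⟨hxE, hxz⟩ : x ∈ M.E \ {z})
        rcases this with h | h
        · exact absurd h hxX
        · exact Or.inr h
    · rintro (rfl | hxY)
      · exact ⟨hz, hzX⟩
      · exact ⟨hYE hxY, fun hxX => (hdisj.ne_of_mem hxX hxY) rfl⟩
  have hlamMc : (rk (contract M {z}) X : ℤ) + rk (contract M {z}) Y - rk (contract M {z}) (M.E \ {z}) ≤ 1 := by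
    unfold lambda at hlam2
    rw [hEX] at hlam2
    omega
  have hrMcX : 2 ≤ rk (contract M {z}) X := by omega
  have hrMcY : 2 ≤ rk (contract M {z}) Y := by omega
  -- get a simplification
  obtain ⟨N, hNsimp⟩ := exists_simplification (contract M {z})
  have h3c := hsi N hNsimp
  obtain ⟨W, hWE, rfl, hW1, hW2, hW3⟩ := hNsimp
  rw [contract_ground] at hWE
  -- looplessness of (contract M {z})
  have hloop : ∀ e ∈ M.E \ {z}, (contract M {z}).Indep {e} := by
    intro e he
    have hez : z ≠ e := fun h => he.2 (by simp [← h])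
    have hp : rk M (insert z {e}) = 2 := pair_rk_two hE hM h4 hz he.1 hez
    have := Mc_rk hE hz hzrk (singleton_subset_iff.2 he)
    exact indep_singleton_of_rk hMcfin (by omega)
  -- define A as reps in closure of X
  set A := W ∩ (contract M {z}).closure X with hA
  set R := W \ A with hR
  have hAW : A ⊆ W := inter_subset_left
  have hAR : A ∪ R = W := union_diff_cancel hAW
  have hXMcE : X ⊆ (contract M {z}).E := fun x hx => hXE' hx
  have hYMcE : Y ⊆ (contract M {z}).E := fun x hx => hYE' hx
  have hXclA : X ⊆ (contract M {z}).closure A := by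
    intro x hx
    have hxnl : (contract M {z}).Indep {x} := hloop x (hXE' hx)
    obtain ⟨f, hfW, hxf⟩ := hW3 x (hXE' hx) hxnl
    have hfx : f ∈ (contract M {z}).closure {x} :=
      mem_closure_singleton_symm hxnl (hWE hfW) hxf
    have hfclX : f ∈ (contract M {z}).closure X :=
      (contract M {z}).closure_subset_closure (singleton_subset_iff.2 hx) hfx
    have hfA : f ∈ A := ⟨hfW, hfclX⟩
    exact (contract M {z}).closure_subset_closure (singleton_subset_iff.2 hfA) hxf
  have hrkA : rk (contract M {z}) A = rk (contract M {z}) X :=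
    le_antisymm (rk_le_of_subset_closure hMcfin inter_subset_right)
      (rk_le_of_subset_closure hMcfin hXclA)
  have hA2 : 2 ≤ A.ncard :=
    le_ncard_of_le_rk hMcfin (hAW.trans hWE) (by omega)
  have hspanset : M.E \ {z} ⊆ (contract M {z}).closure W := by
    intro e he
    obtain ⟨f, hfW, hef⟩ := hW3 e he (hloop e he)
    exact (contract M {z}).closure_subset_closure (singleton_subset_iff.2 hfW) hef
  have hspan : rk (contract M {z}) (M.E \ {z}) = rk (contract M {z}) W := rk_spanning_eq hMcfin hWE hspanset
  have hWfin : W.Finite := hMcfin.subset hWE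
  have hRclY : R ⊆ (contract M {z}).closure Y := by
    rintro w ⟨hwW, hwA⟩
    have hwE' : w ∈ M.E \ {z} := hWE hwW
    have : w ∈ X ∪ Y := hXY' ▸ hwE'
    rcases this with h | h
    · exact absurd ⟨hwW, (contract M {z}).subset_closure X hXMcE h⟩ hwA
    · exact (contract M {z}).subset_closure Y hYMcE h
  by_cases hR2 : 2 ≤ R.ncard
  · -- 2-separation A of N
    refine absurd ?_ (h3c 2 (by norm_num) A)
    refine ⟨by rw [restrict_ground_eq]; exact hAW, ?_, hA2, ?_⟩
    · unfold lambda
      rw [restrict_ground_eq, rk_restrict hAW, rk_restrict (diff_subset : W \ A ⊆ W),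
        rk_restrict (Subset.rfl : W ⊆ W)]
      have h1 : rk (contract M {z}) (W \ A) ≤ rk (contract M {z}) Y := rk_le_of_subset_closure hMcfin hRclY
      rw [← hspan]
      push_cast
      omega
    · rw [restrict_ground_eq]
      exact hR2
  · -- R has at most one element
    have hRfin : R.Finite := hWfin.subset diff_subset
    have hnotX : ¬ rk (contract M {z}) (M.E \ {z}) ≤ rk (contract M {z}) X := by
      intro hle
      omega
    rcases R.eq_empty_or_nonempty with hRe | ⟨w₀, hw₀⟩
    · -- W ⊆ closure X, contradiction
      refine hnotX ?_
      have hWclX : W ⊆ (contract M {z}).closure X := by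
        intro w hw
        have : w ∈ A := by
          have : w ∈ A ∪ R := hAR ▸ hw
          rcases this with h | h
          · exact h
          · exact absurd h (hRe ▸ notMem_empty w)
        exact this.2
      calc rk (contract M {z}) (M.E \ {z}) ≤ rk (contract M {z}) W := rk_spanning_eq hMcfin hWE hspanset ▸ le_refl _
        _ ≤ rk (contract M {z}) X := rk_le_of_subset_closure hMcfin
          (subset_trans ((contract M {z}).subset_closure W (hWE.trans (le_refl _)))
            (closure_subset_closure_of_subset_closure hWclX))
    · have hRsing : R = {w₀} := by
        have h1 : R.ncard ≤ 1 := by omega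
        apply eq_singleton_iff_unique_mem.2 ⟨hw₀, fun x hx => ?_⟩
        by_contra hne
        have : 2 ≤ R.ncard := by
          have : ({x, w₀} : Set α).ncard = 2 := ncard_pair hne
          have hsub : ({x, w₀} : Set α) ⊆ R := by rintro y (rfl | rfl); exacts [hx, hw₀]
          have := ncard_le_ncard hsub hRfin
          omega
        omega
      have hw₀E : w₀ ∈ (contract M {z}).E := hWE hw₀.1
      have hErkW : rk (contract M {z}) (M.E \ {z}) = rk (contract M {z}) (insert w₀ A) := by
        rw [hspan, ← hAR, hRsing, union_singleton]
      by_cases hw₀cl : w₀ ∈ (contract M {z}).closure A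
      · refine hnotX ?_
        rw [hErkW, (mem_closure_iff_rk hMcfin hw₀E).1 hw₀cl, hrkA]
      · have hrkins : rk (contract M {z}) (insert w₀ A) = rk (contract M {z}) A + 1 :=
          rk_insert_eq_of_not_mem_closure hMcfin hw₀E hw₀cl
        -- 1-separation {w₀} of N
        refine absurd ?_ (h3c 1 (by norm_num) {w₀})
        have hWw₀ : W \ {w₀} = A := by rw [← hRsing, hR, diff_diff_cancel_left hAW]
        have hw₀rk : rk (contract M {z}) {w₀} = 1 := by
          rw [indep_rk_eq hMcfin (hW1 w₀ hw₀.1), ncard_singleton]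
        refine ⟨by rw [restrict_ground_eq]; exact singleton_subset_iff.2 hw₀.1, ?_, by simp, ?_⟩
        · unfold lambda
          rw [restrict_ground_eq, rk_restrict (singleton_subset_iff.2 hw₀.1),
            rk_restrict (diff_subset : W \ {w₀} ⊆ W), rk_restrict (Subset.rfl : W ⊆ W),
            hWw₀, ← hspan, hErkW, hrkins, hw₀rk, hrkA]
          push_cast
          omega
        · rw [restrict_ground_eq, hWw₀]
          omega

end NDP

namespace NDP
open Set Matroid
variable {α : Type*} {M : Matroid α} {X Y A B W S P Q : Set α} {e f z w : α} {n : ℕ}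

lemma backward_dir (hE : M.E.Finite) (hM : ThreeConnected M) (hz : z ∈ M.E)
    (hbig : 4 ≤ M.E.ncard) {N : Matroid α}
    (hNsimp : IsSimplification (contract M {z}) N) (hN3 : ¬ ThreeConnected N) :
    ∃ X Y : Set α, Disjoint X Y ∧ z ∉ X ∧ z ∉ Y ∧ X ∪ {z} ∪ Y = M.E ∧
      (lambda M (X ∪ {z}) ≤ 2 ∧ 3 ≤ (X ∪ {z}).ncard ∧ 3 ≤ Y.ncard ∧
        3 ≤ rk M (X ∪ {z}) ∧ 3 ≤ rk M Y) ∧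
      (lambda M X ≤ 2 ∧ 3 ≤ X.ncard ∧ 3 ≤ (Y ∪ {z}).ncard ∧
        3 ≤ rk M X ∧ 3 ≤ rk M (Y ∪ {z})) ∧
      z ∈ M.closure X ∩ M.closure Y := by
  classical
  obtain ⟨W, hWE, rfl, hW1, hW2, hW3⟩ := hNsimp
  rw [ThreeConnected] at hN3
  push_neg at hN3
  obtain ⟨k, hk, S, hsep⟩ := hN3
  obtain ⟨hSW, hlamS, hkS, hkS'⟩ := hsep
  rw [restrict_ground_eq] at hSW hkS'
  rw [contract_ground] at hWE
  have hMcfin : (contract M {z}).E.Finite := hE.subset diff_subset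
  have hWfin : W.Finite := hMcfin.subset hWE
  have hk0 : k ≠ 0 := by
    rintro rfl
    have h0 := lambda_nonneg (M := contract M {z} ↾ W) (X := S)
      (by rw [restrict_ground_eq]; exact hWfin) (by rw [restrict_ground_eq]; exact hSW)
    push_cast at hlamS
    linarith
  have hzrk : rk M {z} = 1 := singleton_rk_one hE hM (by omega) hz
  have hloop : ∀ e ∈ M.E \ {z}, (contract M {z}).Indep {e} := by
    intro e he
    have hez : z ≠ e := fun h => he.2 (by simp [← h])
    have hp : rk M (insert z {e}) = 2 := pair_rk_two hE hM hbig hz he.1 hez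
    have := Mc_rk hE hz hzrk (singleton_subset_iff.2 he)
    exact indep_singleton_of_rk hMcfin (by omega)
  set A := {e ∈ M.E \ {z} | ∃ a ∈ S, e ∈ (contract M {z}).closure {a}} with hAdef
  set B := {e ∈ M.E \ {z} | ∃ b ∈ W \ S, e ∈ (contract M {z}).closure {b}} with hBdef
  have hAE' : A ⊆ M.E \ {z} := sep_subset _ _
  have hBE' : B ⊆ M.E \ {z} := sep_subset _ _
  have hSA : S ⊆ A := fun a ha =>
    ⟨hWE (hSW ha), a, ha, (contract M {z}).mem_closure_self a (hWE (hSW ha))⟩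
  have hWSB : W \ S ⊆ B := fun b hb =>
    ⟨hWE hb.1, b, hb, (contract M {z}).mem_closure_self b (hWE hb.1)⟩
  have hdisjAB : Disjoint A B := by
    rw [disjoint_left]
    rintro e ⟨heE, a, haS, hea⟩ ⟨-, b, hbWS, heb⟩
    have henl := hloop e heE
    have hcla : (contract M {z}).closure {e} = (contract M {z}).closure {a} :=
      closure_singleton_eq_of_mem henl (hW1 a (hSW haS)) hea
    have hclb : (contract M {z}).closure {e} = (contract M {z}).closure {b} :=
      closure_singleton_eq_of_mem henl (hW1 b hbWS.1) heb
    have hab : a ∈ (contract M {z}).closure {b} := by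
      have haa : a ∈ (contract M {z}).closure {a} :=
        (contract M {z}).mem_closure_self a (hWE (hSW haS))
      rw [← hcla, hclb] at haa
      exact haa
    have := hW2 a b (hSW haS) hbWS.1 hab
    exact hbWS.2 (this ▸ haS)
  have hcover : A ∪ B = M.E \ {z} := by
    apply subset_antisymm (union_subset hAE' hBE')
    intro e he
    obtain ⟨f, hfW, hef⟩ := hW3 e he (hloop e he)
    by_cases hfS : f ∈ S
    · exact Or.inl ⟨he, f, hfS, hef⟩
    · exact Or.inr ⟨he, f, ⟨hfW, hfS⟩, hef⟩
  have hAclS : A ⊆ (contract M {z}).closure S := by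
    rintro e ⟨heE, a, haS, hea⟩
    exact (contract M {z}).closure_subset_closure (singleton_subset_iff.2 haS) hea
  have hBclS : B ⊆ (contract M {z}).closure (W \ S) := by
    rintro e ⟨heE, b, hbWS, heb⟩
    exact (contract M {z}).closure_subset_closure (singleton_subset_iff.2 hbWS) heb
  have hrkA : rk (contract M {z}) A = rk (contract M {z}) S :=
    le_antisymm (rk_le_of_subset_closure hMcfin hAclS) (rk_mono hMcfin hSA)
  have hrkB : rk (contract M {z}) B = rk (contract M {z}) (W \ S) :=
    le_antisymm (rk_le_of_subset_closure hMcfin hBclS)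
      (rk_mono hMcfin hWSB)
  have hspanset : M.E \ {z} ⊆ (contract M {z}).closure W := by
    intro e he
    obtain ⟨f, hfW, hef⟩ := hW3 e he (hloop e he)
    exact (contract M {z}).closure_subset_closure (singleton_subset_iff.2 hfW) hef
  have hspan : rk (contract M {z}) (M.E \ {z}) = rk (contract M {z}) W :=
    rk_spanning_eq hMcfin hWE hspanset
  have hlam' : (rk (contract M {z}) A : ℤ) + rk (contract M {z}) B
      - rk (contract M {z}) (M.E \ {z}) ≤ (k : ℤ) - 1 := by
    unfold lambda at hlamS
    rw [restrict_ground_eq, rk_restrict hSW, rk_restrict (diff_subset : W \ S ⊆ W),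
      rk_restrict (Subset.rfl : W ⊆ W)] at hlamS
    rw [hrkA, hrkB, hspan]
    omega
  have hkA : k ≤ A.ncard := le_trans hkS (ncard_le_ncard hSA (hE.subset (hAE'.trans diff_subset)))
  have hkB : k ≤ B.ncard := le_trans hkS' (ncard_le_ncard hWSB (hE.subset (hBE'.trans diff_subset)))
  have hzclA : z ∈ M.closure A := lift_closure hE hM hz hzrk hcover hdisjAB hk hlam' hkA hkB
  have hzclB : z ∈ M.closure B := by
    refine lift_closure hE hM hz hzrk (by rw [union_comm]; exact hcover) hdisjAB.symm hk ?_ hkB hkA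
    omega
  have eA := Mc_rk hE hz hzrk hAE'
  have eB := Mc_rk hE hz hzrk hBE'
  have eE := Mc_rk hE hz hzrk (Subset.rfl : M.E \ {z} ⊆ M.E \ {z})
  rw [insert_diff_singleton, insert_eq_of_mem hz] at eE
  have hclAeq : rk M (insert z A) = rk M A := (mem_closure_iff_rk hE hz).1 hzclA
  have hclBeq : rk M (insert z B) = rk M B := (mem_closure_iff_rk hE hz).1 hzclB
  have hzA : z ∉ A := fun h => (hAE' h).2 rfl
  have hzB : z ∉ B := fun h => (hBE' h).2 rfl
  have hEdiffA : M.E \ A = insert z B := by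
    ext x
    simp only [mem_diff, mem_insert_iff]
    constructor
    · rintro ⟨hxE, hxA⟩
      rcases eq_or_ne x z with rfl | hxz
      · exact Or.inl rfl
      · have hx : x ∈ A ∪ B := by rw [hcover]; exact ⟨hxE, hxz⟩
        rcases hx with h | h
        · exact absurd h hxA
        · exact Or.inr h
    · rintro (rfl | hxB)
      · exact ⟨hz, hzA⟩
      · exact ⟨(hBE' hxB).1, fun hxA => (hdisjAB.ne_of_mem hxA hxB) rfl⟩
  have hEdiffB : M.E \ B = insert z A := by
    ext x
    simp only [mem_diff, mem_insert_iff]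
    constructor
    · rintro ⟨hxE, hxB⟩
      rcases eq_or_ne x z with rfl | hxz
      · exact Or.inl rfl
      · have hx : x ∈ A ∪ B := by rw [hcover]; exact ⟨hxE, hxz⟩
        rcases hx with h | h
        · exact Or.inr h
        · exact absurd h hxB
    · rintro (rfl | hxA)
      · exact ⟨hz, hzB⟩
      · exact ⟨(hAE' hxA).1, fun hxB => (hdisjAB.ne_of_mem hxA hxB) rfl⟩
  have hEdiffzA : M.E \ insert z A = B := by
    rw [← union_singleton, ← diff_diff, hEdiffA]
    rw [insert_diff_of_mem _ (mem_singleton z), diff_singleton_eq_self hzB]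
  have hk12 : k = 1 ∨ k = 2 := by omega
  rcases hk12 with rfl | rfl
  · -- k = 1
    exfalso
    by_cases hB2 : 2 ≤ B.ncard
    · refine absurd ?_ (hM 2 (by norm_num) (insert z A))
      refine ⟨insert_subset hz (hAE'.trans diff_subset), ?_, ?_, ?_⟩
      · unfold lambda
        rw [hEdiffzA]
        push_cast
        omega
      · rw [ncard_insert_of_notMem hzA (hE.subset (hAE'.trans diff_subset))]
        omega
      · rw [hEdiffzA]
        exact hB2
    · obtain ⟨b, hb⟩ := nonempty_of_ncard_ne_zero (show B.ncard ≠ 0 by omega)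
      have hBsing : B = {b} := by
        apply eq_singleton_iff_unique_mem.2 ⟨hb, fun x hx => ?_⟩
        by_contra hne
        have hsub : ({x, b} : Set α) ⊆ B := by rintro y (rfl | rfl); exacts [hx, hb]
        have h2 : 2 ≤ B.ncard := by
          have := ncard_le_ncard hsub (hE.subset (hBE'.trans diff_subset))
          rw [ncard_pair hne] at this
          omega
        omega
      have hbE : b ∈ M.E := (hBE' hb).1
      have hzb : z ≠ b := fun h => (hBE' hb).2 (by simp [← h])
      have hp : rk M (insert z {b}) = 2 := pair_rk_two hE hM hbig hz hbE hzb
      have hb1 : rk M {b} = 1 := singleton_rk_one hE hM (by omega) hbE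
      rw [hBsing] at hclBeq
      omega
  · -- k = 2
    -- rank at least 2 on each side of the separation
    have hrk2 : ∀ T : Set α, T ⊆ W → 2 ≤ T.ncard → 2 ≤ rk (contract M {z}) T := by
      intro T hTW hT2
      obtain ⟨s₁, hs₁, s₂, hs₂, hss⟩ := (one_lt_ncard (hWfin.subset hTW)).1 (by omega)
      have hpair : rk (contract M {z}) (insert s₂ {s₁}) = 2 := by
        refine rk_pair_of_not_parallel hMcfin (hW1 s₁ (hTW hs₁)) (hWE (hTW hs₂)) ?_
        intro hcl
        exact hss.symm (hW2 s₂ s₁ (hTW hs₂) (hTW hs₁) hcl)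
      have : rk (contract M {z}) (insert s₂ {s₁}) ≤ rk (contract M {z}) T := by
        refine rk_mono hMcfin ?_
        rintro x (rfl | rfl); exacts [hs₂, hs₁]
      omega
    have hrkS2 : 2 ≤ rk (contract M {z}) S := hrk2 S hSW hkS
    have hrkWS2 : 2 ≤ rk (contract M {z}) (W \ S) := hrk2 (W \ S) diff_subset hkS'
    have hrkMA : 3 ≤ rk M A := by omega
    have hrkMB : 3 ≤ rk M B := by omega
    have hAcard : 3 ≤ A.ncard := le_ncard_of_le_rk hE (hAE'.trans diff_subset) hrkMA
    have hBcard : 3 ≤ B.ncard := le_ncard_of_le_rk hE (hBE'.trans diff_subset) hrkMB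
    refine ⟨A, B, hdisjAB, hzA, hzB, ?_, ⟨?_, ?_, hBcard, ?_, hrkMB⟩,
      ⟨?_, hAcard, ?_, hrkMA, ?_⟩, hzclA, hzclB⟩
    · -- A ∪ {z} ∪ B = M.E
      ext x
      simp only [mem_union, mem_singleton_iff]
      constructor
      · rintro ((h | rfl) | h)
        · exact (hAE' h).1
        · exact hz
        · exact (hBE' h).1
      · intro hxE
        rcases eq_or_ne x z with rfl | hxz
        · exact Or.inl (Or.inr rfl)
        · have hx : x ∈ A ∪ B := by rw [hcover]; exact ⟨hxE, hxz⟩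
          rcases hx with h | h
          · exact Or.inl (Or.inl h)
          · exact Or.inr h
    · -- lambda M (A ∪ {z}) ≤ 2
      rw [union_singleton]
      unfold lambda
      rw [hEdiffzA]
      push_cast
      omega
    · -- 3 ≤ (A ∪ {z}).ncard
      rw [union_singleton, ncard_insert_of_notMem hzA (hE.subset (hAE'.trans diff_subset))]
      omega
    · -- 3 ≤ rk M (A ∪ {z})
      rw [union_singleton]
      omega
    · -- lambda M A ≤ 2
      unfold lambda
      rw [hEdiffA]
      push_cast
      omega
    · -- 3 ≤ (B ∪ {z}).ncard
      rw [union_singleton, ncard_insert_of_notMem hzB (hE.subset (hBE'.trans diff_subset))]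
      omega
    · -- 3 ≤ rk M (B ∪ {z})
      rw [union_singleton]
      omega
end NDP


/-- A 3-connected matroid `M` has a vertical 3-separation `(X, {z}, Y)`
iff `si(M/z)` is not 3-connected. -/
theorem statement_14 {α : Type*} (M : Matroid α) [M.Finite] (hM : NDP.ThreeConnected M)
    (z : α) (hz : z ∈ M.E) :
    (∃ X Y : Set α, Disjoint X Y ∧ z ∉ X ∧ z ∉ Y ∧ X ∪ {z} ∪ Y = M.E ∧
      (NDP.lambda M (X ∪ {z}) ≤ 2 ∧ 3 ≤ (X ∪ {z}).ncard ∧ 3 ≤ Y.ncard ∧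
        3 ≤ NDP.rk M (X ∪ {z}) ∧ 3 ≤ NDP.rk M Y) ∧
      (NDP.lambda M X ≤ 2 ∧ 3 ≤ X.ncard ∧ 3 ≤ (Y ∪ {z}).ncard ∧
        3 ≤ NDP.rk M X ∧ 3 ≤ NDP.rk M (Y ∪ {z})) ∧
      z ∈ M.closure X ∩ M.closure Y) ↔
    ¬ NDP.SiThreeConnected (NDP.contract M {z}) := by
  have hE : M.E.Finite := M.ground_finite
  constructor
  · rintro ⟨X, Y, hdisj, hzX, hzY, hunion, ⟨hl1, hc1, hc2, hr1, hr2⟩,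
      ⟨hl2, hc3, hc4, hr3, hr4⟩, hzcl⟩
    exact NDP.forward_dir hE hM hz hdisj hzX hzY hunion hl2 hc3 hc2 hr3 hr2 hzcl.1 hzcl.2
  · intro hnsi
    by_cases hsmall : M.E.ncard ≤ 3
    · exact absurd (NDP.small_case hE hM hz hsmall) hnsi
    · push_neg at hsmall
      rw [NDP.SiThreeConnected] at hnsi
      push_neg at hnsi
      obtain ⟨N, hNsimp, hN3⟩ := hnsi
      exact NDP.backward_dir hE hM hz (by omega) hNsimp hN3
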